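/- If V ∈ ℝ^{n×r} has linearly independent columns and a is not in the column span of V, then there exists a characteristic set J' ⊆ {1,…,n} with at most r+1 elements, i.e., μ(J') = μ(J) and μ(J'') < μ(J) for every proper subset J'' ⊊ J'. -/
import Mathlib

/-- Existence of a characteristic set with at most `r+1` elements in the real case. -/
theorem stmt_6 (n r : ℕ) (hn : r < n) (V : Matrix (Fin n) (Fin r) ℝ) (a : Fin n → ℝ)
    (hV : LinearIndependent ℝ (fun i : Fin r => fun j : Fin n => V j i))
    (ha : a ∉ Set.range V.mulVec) :
    ∃ S : Finset (Fin n), S.card ≤ r + 1 ∧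
      (⨅ u : Fin r → ℝ, ⨆ j ∈ S, |a j - ∑ i, u i * V j i|) =
        (⨅ u : Fin r → ℝ, ⨆ j, |a j - ∑ i, u i * V j i|) ∧
      ∀ T : Finset (Fin n), T ⊂ S →
        (⨅ u : Fin r → ℝ, ⨆ j ∈ T, |a j - ∑ i, u i * V j i|) <
          (⨅ u : Fin r → ℝ, ⨆ j, |a j - ∑ i, u i * V j i|) := by
  classical
  have hnpos : 0 < n := lt_of_le_of_lt (Nat.zero_le r) hn
  set cf : (Fin r → ℝ) → Fin n → ℝ := fun u j => |a j - ∑ i, u i * V j i| with hcf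
  set g : Finset (Fin n) → (Fin r → ℝ) → ℝ :=
    fun S u => ⨆ j ∈ S, cf u j with hg
  set μ : Finset (Fin n) → ℝ := fun S => ⨅ u, g S u with hμ
  set μJ : ℝ := ⨅ u : Fin r → ℝ, ⨆ j, cf u j with hμJ
  -- basic facts
  have hgnn : ∀ S u, 0 ≤ g S u := fun S u =>
    Real.iSup_nonneg fun j => Real.iSup_nonneg fun _ => abs_nonneg _
  have hbddg : ∀ (S : Finset (Fin n)) (u : Fin r → ℝ), BddAbove (Set.range fun j : Fin n => ⨆ _ : j ∈ S, cf u j) :=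
    fun S u => (Set.finite_range _).bddAbove
  have hgmono : ∀ {S T : Finset (Fin n)} (u : Fin r → ℝ), S ⊆ T → g S u ≤ g T u := by
    intro S T u hST
    refine ciSup_mono (hbddg T u) fun j => ?_
    by_cases hj : j ∈ S
    · rw [ciSup_pos hj, ciSup_pos (hST hj)]
    · haveI : IsEmpty (j ∈ S) := ⟨hj⟩
      rw [Real.iSup_of_isEmpty (fun _ : j ∈ S => cf u j)]
      exact Real.iSup_nonneg fun _ => abs_nonneg _
  have hterm : ∀ (S : Finset (Fin n)) (u) {j}, j ∈ S → cf u j ≤ g S u := by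
    intro S u j hj
    calc cf u j = ⨆ _ : j ∈ S, cf u j := (ciSup_pos (f := fun _ : j ∈ S => cf u j) hj).symm
    _ ≤ g S u := le_ciSup (hbddg S u) j
  have hgle : ∀ (S : Finset (Fin n)) (u) {c : ℝ}, 0 ≤ c → (∀ j ∈ S, cf u j ≤ c) →
      g S u ≤ c := by
    intro S u c hc h
    exact Real.iSup_le (fun j => Real.iSup_le (fun hj => h j hj) hc) hc
  have hbddμ : ∀ S : Finset (Fin n), BddBelow (Set.range (g S)) := by
    intro S
    exact ⟨0, by rintro x ⟨u, rfl⟩; exact hgnn S u⟩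
  have hμnn : ∀ S, 0 ≤ μ S := fun S => Real.iInf_nonneg (hgnn S)
  have hμmono : ∀ {S T : Finset (Fin n)}, S ⊆ T → μ S ≤ μ T := by
    intro S T hST
    exact ciInf_mono (hbddμ S) fun u => hgmono u hST
  have huniv : ∀ u, g Finset.univ u = ⨆ j, cf u j :=
    fun u => iSup_congr fun j => ciSup_pos (Finset.mem_univ j)
  have hμuniv : μ Finset.univ = μJ := iInf_congr huniv
  have hμleJ : ∀ S : Finset (Fin n), μ S ≤ μJ := by
    intro S
    rw [← hμuniv]; exact hμmono (Finset.subset_univ S)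
  -- Step 1: a set of size ≤ r+1 achieving μJ
  have key : ∃ S₀ : Finset (Fin n), S₀.card ≤ r + 1 ∧ μ S₀ = μJ := by
    by_contra hcon
    push_neg at hcon
    have hall : ∀ S : Finset (Fin n), S.card ≤ r + 1 → μ S < μJ :=
      fun S hS => lt_of_le_of_ne (hμleJ S) (hcon S hS)
    set P := Finset.univ.powerset.filter (fun S : Finset (Fin n) => S.card ≤ r + 1) with hP
    have hPne : P.Nonempty := ⟨∅, by simp [hP]⟩
    set m := P.sup' hPne μ with hm
    have hmlt : m < μJ := by
      rw [hm, Finset.sup'_lt_iff]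
      intro S hS
      exact hall S (Finset.mem_filter.mp hS).2
    have hm0 : 0 ≤ m := le_trans (hμnn ∅) (Finset.le_sup' μ (by simp [hP]))
    set c : ℝ := (m + μJ) / 2 with hc
    have hmc : m < c := by rw [hc]; linarith
    have hcμ : c < μJ := by rw [hc]; linarith
    have hc0 : 0 ≤ c := by
      have := hμnn Finset.univ; rw [hμuniv] at this; rw [hc]; linarith
    set C : Fin n → Set (Fin r → ℝ) := fun j => {u | cf u j ≤ c} with hC
    have hconv : ∀ j ∈ (Finset.univ : Finset (Fin n)), Convex ℝ (C j) := by
      intro j _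
      intro u hu v hv θ σ hθ hσ hθσ
      simp only [hC, Set.mem_setOf_eq, hcf] at hu hv ⊢
      have hsum : ∑ i, (θ • u + σ • v) i * V j i
          = θ * ∑ i, u i * V j i + σ * ∑ i, v i * V j i := by
        rw [Finset.mul_sum, Finset.mul_sum, ← Finset.sum_add_distrib]
        refine Finset.sum_congr rfl fun i _ => ?_
        simp [Pi.add_apply, Pi.smul_apply, smul_eq_mul]; ring
      have heq : a j - ∑ i, (θ • u + σ • v) i * V j i
          = θ * (a j - ∑ i, u i * V j i) + σ * (a j - ∑ i, v i * V j i) := by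
        rw [hsum]; linear_combination (- a j) * hθσ
      rw [heq]
      calc |θ * (a j - ∑ i, u i * V j i) + σ * (a j - ∑ i, v i * V j i)|
          ≤ |θ * (a j - ∑ i, u i * V j i)| + |σ * (a j - ∑ i, v i * V j i)| := abs_add_le _ _
        _ = θ * |a j - ∑ i, u i * V j i| + σ * |a j - ∑ i, v i * V j i| := by
            rw [abs_mul, abs_mul, abs_of_nonneg hθ, abs_of_nonneg hσ]
        _ ≤ θ * c + σ * c := by
            gcongr <;> first | exact hu | exact hv
        _ = c := by rw [← add_mul, hθσ, one_mul]
    have hinter : ∀ I ⊆ (Finset.univ : Finset (Fin n)),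
        I.card ≤ Module.finrank ℝ (Fin r → ℝ) + 1 → (⋂ j ∈ I, C j).Nonempty := by
      intro I _ hIcard
      rw [Module.finrank_fin_fun] at hIcard
      have hμI : μ I < c := by
        refine lt_of_le_of_lt ?_ hmc
        exact Finset.le_sup' μ (Finset.mem_filter.mpr ⟨Finset.mem_powerset.mpr (Finset.subset_univ I), hIcard⟩)
      obtain ⟨u, hu⟩ := exists_lt_of_ciInf_lt hμI
      refine ⟨u, Set.mem_iInter₂.mpr fun j hj => ?_⟩
      exact le_of_lt (lt_of_le_of_lt (hterm I u hj) hu)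
    obtain ⟨u, hu⟩ := Convex.helly_theorem' (𝕜 := ℝ) hconv hinter
    have hu' : ∀ j : Fin n, cf u j ≤ c := by
      intro j
      have := Set.mem_iInter₂.mp hu j (Finset.mem_univ j)
      exact this
    have : μJ ≤ c := by
      rw [← hμuniv]
      exact le_trans (ciInf_le (hbddμ _) u) (hgle Finset.univ u hc0 fun j _ => hu' j)
    linarith
  obtain ⟨S₀, hS₀card, hS₀⟩ := key
  -- Step 2: minimal cardinality subset of S₀ achieving μJ
  set Q := S₀.powerset.filter (fun S => μ S = μJ) with hQ
  have hS₀Q : S₀ ∈ Q := Finset.mem_filter.mpr ⟨Finset.mem_powerset.mpr subset_rfl, hS₀⟩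
  obtain ⟨S, hSQ, hSmin⟩ := Finset.exists_min_image Q Finset.card ⟨S₀, hS₀Q⟩
  obtain ⟨hSsub, hSμ⟩ := Finset.mem_filter.mp hSQ
  refine ⟨S, ?_, hSμ, ?_⟩
  · exact le_trans (Finset.card_le_card (Finset.mem_powerset.mp hSsub)) hS₀card
  · intro T hT
    have hTne : μ T ≠ μJ := by
      intro hTμ
      have hTQ : T ∈ Q := Finset.mem_filter.mpr
        ⟨Finset.mem_powerset.mpr (hT.subset.trans (Finset.mem_powerset.mp hSsub)), hTμ⟩
      exact absurd (hSmin T hTQ) (not_le_of_gt (Finset.card_lt_card hT))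
    exact lt_of_le_of_ne (hμleJ T) hTne
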